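/- arXiv:2205.05604 — 2 statements merged into one kernel-verified Lean document; each statement's English description precedes it below -/
import Mathlib

section
/- For all reals m₁ > 0, m₂ > 0, p ≥ 0, q ≥ 0 and A ≤ 0, one has (m₁^{m₁} m₂^{m₂}/(Γ(m₁)Γ(m₂))) · ∫₀^∞ ∫₀^∞ u₁^{m₁−1} u₂^{m₂−1} e^{−m₁u₁ − m₂u₂} · e^{(p·u₁ + q·u₂)A} · I₀(2√(p q u₁ u₂)·A) du₁ du₂ = (m₁^{m₁}/(m₁ − pA)^{m₁}) · (m₂^{m₂}/(m₂ − qA)^{m₂}) · ₂F₁(m₁, m₂; 1; p q A² / ((m₁ − pA)(m₂ − qA))), where the argument of ₂F₁ lies in [0,1). -/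
open Real MeasureTheory Filter Set Topology

/-- Rising factorial (Pochhammer symbol) `(a)_k` for a real `a`. -/
noncomputable def risingFactorial (a : ℝ) (k : ℕ) : ℝ :=
  ∏ i ∈ Finset.range k, (a + i)

/-- The Gauss hypergeometric function `₂F₁(a, b; 1; z)`. -/
noncomputable def gauss2F1 (a b z : ℝ) : ℝ :=
  ∑' k : ℕ, risingFactorial a k * risingFactorial b k / (Nat.factorial k : ℝ) ^ 2 * z ^ k

/-- The modified Bessel function of the first kind of order zero. -/
noncomputable def besselI0 (x : ℝ) : ℝ :=
  ∑' k : ℕ, (x / 2) ^ (2 * k) / (Nat.factorial k : ℝ) ^ 2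


lemma risingFactorial_succ (a : ℝ) (k : ℕ) :
    risingFactorial a (k + 1) = risingFactorial a k * (a + k) := Finset.prod_range_succ _ _

lemma risingFactorial_pos {a : ℝ} (ha : 0 < a) (k : ℕ) : 0 < risingFactorial a k :=
  Finset.prod_pos fun i _ => by positivity

lemma Gamma_add_nat' {m : ℝ} (hm : 0 < m) (k : ℕ) :
    Real.Gamma (m + k) = risingFactorial m k * Real.Gamma m := by
  induction k with
  | zero => simp [risingFactorial]
  | succ n ih =>
    have h : m + ((n : ℝ) + 1) = (m + n) + 1 := by ring
    rw [Nat.cast_add, Nat.cast_one, h, Real.Gamma_add_one (by positivity), ih,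
      risingFactorial_succ]
    ring

lemma tendsto_ratio_aux (a : ℝ) :
    Tendsto (fun k : ℕ => (a + k) / ((k : ℝ) + 1)) atTop (𝓝 1) := by
  have h0 : Tendsto (fun k : ℕ => ((k : ℝ) + 1)) atTop atTop :=
    tendsto_atTop_add_const_right _ 1 tendsto_natCast_atTop_atTop
  have h1 : Tendsto (fun k : ℕ => (a - 1) / ((k : ℝ) + 1)) atTop (𝓝 0) :=
    Tendsto.div_atTop tendsto_const_nhds h0
  have h2 : Tendsto (fun k : ℕ => 1 + (a - 1) / ((k : ℝ) + 1)) atTop (𝓝 (1 + 0)) :=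
    tendsto_const_nhds.add h1
  rw [add_zero] at h2
  refine h2.congr fun k => ?_
  have hk : ((k : ℝ) + 1) ≠ 0 := by positivity
  field_simp
  ring

lemma summable_one_rf {a : ℝ} (ha : 0 < a) {w : ℝ} (hw : 0 ≤ w) :
    Summable (fun k : ℕ => risingFactorial a k / (Nat.factorial k : ℝ) ^ 2 * w ^ k) := by
  rcases eq_or_lt_of_le hw with rfl | hw'
  · refine summable_of_ne_finset_zero (s := {0}) fun k hk => ?_
    have hk0 : k ≠ 0 := by simpa using hk
    simp [zero_pow hk0]
  · set f : ℕ → ℝ := fun k => risingFactorial a k / (Nat.factorial k : ℝ) ^ 2 * w ^ k with hf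
    have hpos : ∀ k, 0 < f k := fun k => by
      have := risingFactorial_pos ha k
      have := Nat.factorial_pos k
      positivity
    refine summable_of_ratio_test_tendsto_lt_one zero_lt_one
      (Eventually.of_forall fun k => (hpos k).ne') ?_
    have key : ∀ k : ℕ, ‖f (k + 1)‖ / ‖f k‖ = ((a + k) / ((k : ℝ) + 1)) * (w / ((k : ℝ) + 1)) := by
      intro k
      rw [Real.norm_eq_abs, Real.norm_eq_abs, abs_of_pos (hpos _), abs_of_pos (hpos _)]
      have h1 : risingFactorial a k ≠ 0 := (risingFactorial_pos ha k).ne'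
      have h2 : ((Nat.factorial k : ℝ)) ≠ 0 := by positivity
      have h3 : ((k : ℝ) + 1) ≠ 0 := by positivity
      have h4 : w ^ k ≠ 0 := pow_ne_zero _ hw'.ne'
      simp only [hf, risingFactorial_succ, Nat.factorial_succ, pow_succ]
      push_cast
      field_simp
    have h0 : Tendsto (fun k : ℕ => ((k : ℝ) + 1)) atTop atTop :=
      tendsto_atTop_add_const_right _ 1 tendsto_natCast_atTop_atTop
    have hlim : Tendsto (fun k : ℕ => ((a + k) / ((k : ℝ) + 1)) * (w / ((k : ℝ) + 1)))
        atTop (𝓝 (1 * 0)) :=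
      (tendsto_ratio_aux a).mul (Tendsto.div_atTop tendsto_const_nhds h0)
    rw [one_mul] at hlim
    exact hlim.congr fun k => (key k).symm

lemma summable_two_rf {a b : ℝ} (ha : 0 < a) (hb : 0 < b) {z : ℝ} (hz0 : 0 ≤ z) (hz1 : z < 1) :
    Summable (fun k : ℕ =>
      risingFactorial a k * risingFactorial b k / (Nat.factorial k : ℝ) ^ 2 * z ^ k) := by
  rcases eq_or_lt_of_le hz0 with rfl | hz'
  · refine summable_of_ne_finset_zero (s := {0}) fun k hk => ?_
    have hk0 : k ≠ 0 := by simpa using hk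
    simp [zero_pow hk0]
  · set f : ℕ → ℝ := fun k =>
      risingFactorial a k * risingFactorial b k / (Nat.factorial k : ℝ) ^ 2 * z ^ k with hf
    have hpos : ∀ k, 0 < f k := fun k => by
      have := risingFactorial_pos ha k
      have := risingFactorial_pos hb k
      have := Nat.factorial_pos k
      positivity
    refine summable_of_ratio_test_tendsto_lt_one hz1
      (Eventually.of_forall fun k => (hpos k).ne') ?_
    have key : ∀ k : ℕ, ‖f (k + 1)‖ / ‖f k‖ =
        ((a + k) / ((k : ℝ) + 1)) * (((b + k) / ((k : ℝ) + 1)) * z) := by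
      intro k
      rw [Real.norm_eq_abs, Real.norm_eq_abs, abs_of_pos (hpos _), abs_of_pos (hpos _)]
      have h1 : risingFactorial a k ≠ 0 := (risingFactorial_pos ha k).ne'
      have h1b : risingFactorial b k ≠ 0 := (risingFactorial_pos hb k).ne'
      have h2 : ((Nat.factorial k : ℝ)) ≠ 0 := by positivity
      have h3 : ((k : ℝ) + 1) ≠ 0 := by positivity
      have h4 : z ^ k ≠ 0 := pow_ne_zero _ hz'.ne'
      simp only [hf, risingFactorial_succ, Nat.factorial_succ, pow_succ]
      push_cast
      field_simp
    have hlim : Tendsto (fun k : ℕ => ((a + k) / ((k : ℝ) + 1)) * (((b + k) / ((k : ℝ) + 1)) * z))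
        atTop (𝓝 (1 * (1 * z))) :=
      (tendsto_ratio_aux a).mul ((tendsto_ratio_aux b).mul tendsto_const_nhds)
    rw [one_mul, one_mul] at hlim
    exact hlim.congr fun k => (key k).symm

lemma integrableOn_gamma_kernel {s r : ℝ} (hs : 0 < s) (hr : 0 < r) :
    IntegrableOn (fun x : ℝ => x ^ (s - 1) * Real.exp (-(r * x))) (Set.Ioi 0) := by
  have h := integrableOn_rpow_mul_exp_neg_mul_rpow (p := 1) (s := s - 1) (b := r)
    (by linarith) zero_lt_one hr
  refine h.congr_fun (fun x _ => ?_) measurableSet_Ioi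
  simp only [Real.rpow_one, neg_mul]

lemma integral_gamma_kernel {s r : ℝ} (hs : 0 < s) (hr : 0 < r) (C : ℝ) :
    ∫ x in Set.Ioi (0 : ℝ), C * (x ^ (s - 1) * Real.exp (-(r * x))) =
      C * ((1 / r) ^ s * Real.Gamma s) := by
  rw [integral_const_mul, Real.integral_rpow_mul_exp_neg_mul_Ioi hs hr]

lemma lintegral_gamma_kernel {C s r : ℝ} (hC : 0 ≤ C) (hs : 0 < s) (hr : 0 < r) :
    (∫⁻ x in Set.Ioi (0 : ℝ), ‖C * (x ^ (s - 1) * Real.exp (-(r * x)))‖₊) =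
      ENNReal.ofReal (C * ((1 / r) ^ s * Real.Gamma s)) := by
  have hint : IntegrableOn (fun x : ℝ => C * (x ^ (s - 1) * Real.exp (-(r * x)))) (Set.Ioi 0) :=
    (integrableOn_gamma_kernel hs hr).const_mul C
  have hnn : 0 ≤ᵐ[volume.restrict (Set.Ioi (0 : ℝ))]
      fun x : ℝ => C * (x ^ (s - 1) * Real.exp (-(r * x))) := by
    filter_upwards [ae_restrict_mem measurableSet_Ioi] with x hx
    have hx0 : (0 : ℝ) < x := hx
    positivity
  calc (∫⁻ x in Set.Ioi (0 : ℝ), ‖C * (x ^ (s - 1) * Real.exp (-(r * x)))‖₊)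
      = ∫⁻ x in Set.Ioi (0 : ℝ), ENNReal.ofReal (C * (x ^ (s - 1) * Real.exp (-(r * x)))) := by
        refine lintegral_congr_ae ?_
        filter_upwards [hnn] with x hx
        exact Real.enorm_eq_ofReal hx
    _ = ENNReal.ofReal (∫ x in Set.Ioi (0 : ℝ), C * (x ^ (s - 1) * Real.exp (-(r * x)))) :=
        (ofReal_integral_eq_lintegral_ofReal hint hnn).symm
    _ = ENNReal.ofReal (C * ((1 / r) ^ s * Real.Gamma s)) := by
        rw [integral_gamma_kernel hs hr]

lemma meas_gamma_kernel (C s r : ℝ) :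
    AEStronglyMeasurable (fun x : ℝ => C * (x ^ (s - 1) * Real.exp (-(r * x))))
      (volume.restrict (Set.Ioi (0 : ℝ))) := by
  refine ContinuousOn.aestronglyMeasurable ?_ measurableSet_Ioi
  refine (continuousOn_const.mul (ContinuousOn.mul ?_ ?_))
  · exact continuousOn_id.rpow_const fun x hx => Or.inl (ne_of_gt hx)
  · exact ((continuousOn_const.mul continuousOn_id).neg).rexp

theorem stmt_1 (m₁ m₂ p q A : ℝ) (hm₁ : 0 < m₁) (hm₂ : 0 < m₂)
    (hp : 0 ≤ p) (hq : 0 ≤ q) (hA : A ≤ 0) :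
    p * q * A ^ 2 / ((m₁ - p * A) * (m₂ - q * A)) ∈ Set.Ico (0 : ℝ) 1 ∧
    m₁ ^ m₁ * m₂ ^ m₂ / (Real.Gamma m₁ * Real.Gamma m₂) *
      ∫ u₁ in Set.Ioi (0 : ℝ), ∫ u₂ in Set.Ioi (0 : ℝ),
        u₁ ^ (m₁ - 1) * u₂ ^ (m₂ - 1) * Real.exp (-(m₁ * u₁) - m₂ * u₂) *
          Real.exp ((p * u₁ + q * u₂) * A) *
          besselI0 (2 * Real.sqrt (p * q * u₁ * u₂) * A) =
      m₁ ^ m₁ / (m₁ - p * A) ^ m₁ * (m₂ ^ m₂ / (m₂ - q * A) ^ m₂) *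
        gauss2F1 m₁ m₂ (p * q * A ^ 2 / ((m₁ - p * A) * (m₂ - q * A))) := by
  have hpA : 0 ≤ -(p * A) := by nlinarith
  have hqA : 0 ≤ -(q * A) := by nlinarith
  set r₁ : ℝ := m₁ - p * A with hr₁def
  set r₂ : ℝ := m₂ - q * A with hr₂def
  have hr₁ : 0 < r₁ := by rw [hr₁def]; linarith
  have hr₂ : 0 < r₂ := by rw [hr₂def]; linarith
  set c : ℝ := p * q * A ^ 2 with hcdef
  have hc : 0 ≤ c := by rw [hcdef]; positivity
  set z : ℝ := c / (r₁ * r₂) with hzdef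
  have hden : 0 < r₁ * r₂ := mul_pos hr₁ hr₂
  have hz0 : 0 ≤ z := div_nonneg hc hden.le
  have hz1 : z < 1 := by
    rw [hzdef, div_lt_one hden, hr₁def, hr₂def, hcdef]
    nlinarith [mul_pos hm₁ hm₂, mul_nonneg hm₁.le hqA, mul_nonneg hpA hm₂.le]
  refine ⟨⟨hz0, hz1⟩, ?_⟩
  have hΓ₁ : 0 < Real.Gamma m₁ := Real.Gamma_pos_of_pos hm₁
  have hΓ₂ : 0 < Real.Gamma m₂ := Real.Gamma_pos_of_pos hm₂
  have hzeq : z = c * (1 / r₁) * (1 / r₂) := by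
    rw [hzdef]; field_simp
  -- per-k coefficient identity
  have hterm : ∀ k : ℕ,
      (c ^ k / (Nat.factorial k : ℝ) ^ 2 * ((1 / r₂) ^ (m₂ + (k : ℝ)) * Real.Gamma (m₂ + (k : ℝ)))) *
        ((1 / r₁) ^ (m₁ + (k : ℝ)) * Real.Gamma (m₁ + (k : ℝ))) =
      (Real.Gamma m₁ * Real.Gamma m₂ * ((1 / r₁) ^ m₁ * (1 / r₂) ^ m₂)) *
        (risingFactorial m₁ k * risingFactorial m₂ k / (Nat.factorial k : ℝ) ^ 2 * z ^ k) := by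
    intro k
    rw [Gamma_add_nat' hm₁, Gamma_add_nat' hm₂,
      Real.rpow_add (by positivity : (0:ℝ) < 1 / r₁), Real.rpow_add (by positivity : (0:ℝ) < 1 / r₂),
      Real.rpow_natCast, Real.rpow_natCast, hzeq, mul_pow, mul_pow]
    ring
  -- pointwise expansion of the integrand
  have hF : ∀ u₁ ∈ Set.Ioi (0:ℝ), ∀ u₂ ∈ Set.Ioi (0:ℝ),
      u₁ ^ (m₁ - 1) * u₂ ^ (m₂ - 1) * Real.exp (-(m₁ * u₁) - m₂ * u₂) *
        Real.exp ((p * u₁ + q * u₂) * A) * besselI0 (2 * Real.sqrt (p * q * u₁ * u₂) * A)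
      = ∑' k : ℕ, (c ^ k * u₁ ^ k / (Nat.factorial k : ℝ) ^ 2 *
          (u₁ ^ (m₁ - 1) * Real.exp (-(r₁ * u₁)))) *
          (u₂ ^ (m₂ + (k : ℝ) - 1) * Real.exp (-(r₂ * u₂))) := by
    intro u₁ hu₁ u₂ hu₂
    have hu₁0 : (0:ℝ) < u₁ := hu₁
    have hu₂0 : (0:ℝ) < u₂ := hu₂
    have hbes : besselI0 (2 * Real.sqrt (p * q * u₁ * u₂) * A) =
        ∑' k : ℕ, c ^ k * u₁ ^ k * u₂ ^ k / (Nat.factorial k : ℝ) ^ 2 := by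
      simp only [besselI0]
      refine tsum_congr fun k => ?_
      have h2 : 2 * Real.sqrt (p * q * u₁ * u₂) * A / 2 = Real.sqrt (p * q * u₁ * u₂) * A := by
        ring
      have h3 : (Real.sqrt (p * q * u₁ * u₂) * A) ^ 2 = c * u₁ * u₂ := by
        rw [mul_pow, Real.sq_sqrt (by positivity)]
        rw [hcdef]; ring
      rw [h2, pow_mul, h3, mul_pow, mul_pow]
    rw [hbes, ← tsum_mul_left]
    refine tsum_congr fun k => ?_
    have hexp : Real.exp (-(m₁ * u₁) - m₂ * u₂) * Real.exp ((p * u₁ + q * u₂) * A) =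
        Real.exp (-(r₁ * u₁)) * Real.exp (-(r₂ * u₂)) := by
      rw [← Real.exp_add, ← Real.exp_add]
      congr 1
      rw [hr₁def, hr₂def]; ring
    have hu2pow : u₂ ^ (m₂ - 1) * u₂ ^ k = u₂ ^ (m₂ + (k : ℝ) - 1) := by
      rw [← Real.rpow_natCast u₂ k, ← Real.rpow_add hu₂0]
      congr 1; ring
    calc u₁ ^ (m₁ - 1) * u₂ ^ (m₂ - 1) * Real.exp (-(m₁ * u₁) - m₂ * u₂) *
          Real.exp ((p * u₁ + q * u₂) * A) *
          (c ^ k * u₁ ^ k * u₂ ^ k / (Nat.factorial k : ℝ) ^ 2)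
        = (Real.exp (-(m₁ * u₁) - m₂ * u₂) * Real.exp ((p * u₁ + q * u₂) * A)) *
          (u₁ ^ (m₁ - 1) * u₂ ^ (m₂ - 1) * (c ^ k * u₁ ^ k * u₂ ^ k / (Nat.factorial k : ℝ) ^ 2)) := by
          ring
      _ = (Real.exp (-(r₁ * u₁)) * Real.exp (-(r₂ * u₂))) *
          (u₁ ^ (m₁ - 1) * u₂ ^ (m₂ - 1) * (c ^ k * u₁ ^ k * u₂ ^ k / (Nat.factorial k : ℝ) ^ 2)) := by
          rw [hexp]
      _ = (c ^ k * u₁ ^ k / (Nat.factorial k : ℝ) ^ 2 * (u₁ ^ (m₁ - 1) * Real.exp (-(r₁ * u₁)))) *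
          ((u₂ ^ (m₂ - 1) * u₂ ^ k) * Real.exp (-(r₂ * u₂))) := by ring
      _ = _ := by rw [hu2pow]
  -- inner integral
  have hinner : ∀ u₁ ∈ Set.Ioi (0:ℝ),
      (∫ u₂ in Set.Ioi (0:ℝ),
        u₁ ^ (m₁ - 1) * u₂ ^ (m₂ - 1) * Real.exp (-(m₁ * u₁) - m₂ * u₂) *
          Real.exp ((p * u₁ + q * u₂) * A) * besselI0 (2 * Real.sqrt (p * q * u₁ * u₂) * A))
      = ∑' k : ℕ, (c ^ k / (Nat.factorial k : ℝ) ^ 2 *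
          ((1 / r₂) ^ (m₂ + (k : ℝ)) * Real.Gamma (m₂ + (k : ℝ)))) *
          (u₁ ^ (m₁ + (k : ℝ) - 1) * Real.exp (-(r₁ * u₁))) := by
    intro u₁ hu₁
    have hu₁0 : (0:ℝ) < u₁ := hu₁
    have hu₁pow : 0 ≤ u₁ ^ (m₁ - 1) := Real.rpow_nonneg hu₁0.le _
    rw [setIntegral_congr_fun measurableSet_Ioi (fun u₂ hu₂ => hF u₁ hu₁ u₂ hu₂)]
    rw [MeasureTheory.integral_tsum
      (fun k : ℕ => meas_gamma_kernel _ (m₂ + (k : ℝ)) r₂)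
      ?_]
    · refine tsum_congr fun k => ?_
      rw [integral_gamma_kernel (by positivity) hr₂]
      rw [← Real.rpow_natCast u₁ k]
      rw [show u₁ ^ (m₁ + (k:ℝ) - 1) = u₁ ^ (m₁ - 1) * u₁ ^ (k:ℝ) by
        rw [← Real.rpow_add hu₁0]; congr 1; ring]
      ring
    · have heach : ∀ k : ℕ,
          (∫⁻ u₂ in Set.Ioi (0:ℝ), ‖(c ^ k * u₁ ^ k / (Nat.factorial k : ℝ) ^ 2 *
            (u₁ ^ (m₁ - 1) * Real.exp (-(r₁ * u₁)))) *
            (u₂ ^ (m₂ + (k : ℝ) - 1) * Real.exp (-(r₂ * u₂)))‖₊)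
          = ENNReal.ofReal ((c ^ k * u₁ ^ k / (Nat.factorial k : ℝ) ^ 2 *
            (u₁ ^ (m₁ - 1) * Real.exp (-(r₁ * u₁)))) *
            ((1 / r₂) ^ (m₂ + (k : ℝ)) * Real.Gamma (m₂ + (k : ℝ)))) := by
        intro k
        exact lintegral_gamma_kernel (by positivity) (by positivity) hr₂
      simp only [← enorm_eq_nnnorm] at heach
      rw [tsum_congr heach]
      have hsum : Summable (fun k : ℕ => (c ^ k * u₁ ^ k / (Nat.factorial k : ℝ) ^ 2 *
          (u₁ ^ (m₁ - 1) * Real.exp (-(r₁ * u₁)))) *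
          ((1 / r₂) ^ (m₂ + (k : ℝ)) * Real.Gamma (m₂ + (k : ℝ)))) := by
        have hw : 0 ≤ c * u₁ * (1 / r₂) := by positivity
        refine ((summable_one_rf hm₂ hw).mul_left
          (u₁ ^ (m₁ - 1) * Real.exp (-(r₁ * u₁)) * Real.Gamma m₂ * (1 / r₂) ^ m₂)).congr
          fun k => ?_
        rw [Gamma_add_nat' hm₂, Real.rpow_add (by positivity : (0:ℝ) < 1 / r₂),
          Real.rpow_natCast, mul_pow, mul_pow]
        ring
      have hnn : ∀ k : ℕ, 0 ≤ (c ^ k * u₁ ^ k / (Nat.factorial k : ℝ) ^ 2 *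
          (u₁ ^ (m₁ - 1) * Real.exp (-(r₁ * u₁)))) *
          ((1 / r₂) ^ (m₂ + (k : ℝ)) * Real.Gamma (m₂ + (k : ℝ))) := by
        intro k
        have := Real.Gamma_pos_of_pos (show (0:ℝ) < m₂ + k by positivity)
        positivity
      rw [← ENNReal.ofReal_tsum_of_nonneg hnn hsum]
      exact ENNReal.ofReal_ne_top
  -- outer integral
  have houter : (∫ u₁ in Set.Ioi (0:ℝ), ∫ u₂ in Set.Ioi (0:ℝ),
        u₁ ^ (m₁ - 1) * u₂ ^ (m₂ - 1) * Real.exp (-(m₁ * u₁) - m₂ * u₂) *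
          Real.exp ((p * u₁ + q * u₂) * A) * besselI0 (2 * Real.sqrt (p * q * u₁ * u₂) * A))
      = ∑' k : ℕ, (Real.Gamma m₁ * Real.Gamma m₂ * ((1 / r₁) ^ m₁ * (1 / r₂) ^ m₂)) *
          (risingFactorial m₁ k * risingFactorial m₂ k / (Nat.factorial k : ℝ) ^ 2 * z ^ k) := by
    rw [setIntegral_congr_fun measurableSet_Ioi (fun u₁ hu₁ => hinner u₁ hu₁)]
    have hDnn : ∀ k : ℕ, 0 ≤ c ^ k / (Nat.factorial k : ℝ) ^ 2 *
        ((1 / r₂) ^ (m₂ + (k : ℝ)) * Real.Gamma (m₂ + (k : ℝ))) := by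
      intro k
      have := Real.Gamma_pos_of_pos (show (0:ℝ) < m₂ + k by positivity)
      positivity
    rw [MeasureTheory.integral_tsum
      (fun k : ℕ => meas_gamma_kernel _ (m₁ + (k : ℝ)) r₁)
      ?_]
    · refine tsum_congr fun k => ?_
      rw [integral_gamma_kernel (by positivity) hr₁]
      exact hterm k
    · have heach : ∀ k : ℕ,
          (∫⁻ u₁ in Set.Ioi (0:ℝ), ‖(c ^ k / (Nat.factorial k : ℝ) ^ 2 *
            ((1 / r₂) ^ (m₂ + (k : ℝ)) * Real.Gamma (m₂ + (k : ℝ)))) *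
            (u₁ ^ (m₁ + (k : ℝ) - 1) * Real.exp (-(r₁ * u₁)))‖₊)
          = ENNReal.ofReal ((c ^ k / (Nat.factorial k : ℝ) ^ 2 *
            ((1 / r₂) ^ (m₂ + (k : ℝ)) * Real.Gamma (m₂ + (k : ℝ)))) *
            ((1 / r₁) ^ (m₁ + (k : ℝ)) * Real.Gamma (m₁ + (k : ℝ)))) :=
        fun k => lintegral_gamma_kernel (hDnn k) (by positivity) hr₁
      simp only [← enorm_eq_nnnorm] at heach
      rw [tsum_congr heach]
      have hsum : Summable (fun k : ℕ => (c ^ k / (Nat.factorial k : ℝ) ^ 2 *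
          ((1 / r₂) ^ (m₂ + (k : ℝ)) * Real.Gamma (m₂ + (k : ℝ)))) *
          ((1 / r₁) ^ (m₁ + (k : ℝ)) * Real.Gamma (m₁ + (k : ℝ)))) := by
        refine ((summable_two_rf hm₁ hm₂ hz0 hz1).mul_left
          (Real.Gamma m₁ * Real.Gamma m₂ * ((1 / r₁) ^ m₁ * (1 / r₂) ^ m₂))).congr
          fun k => ?_
        exact (hterm k).symm
      have hnn : ∀ k : ℕ, 0 ≤ (c ^ k / (Nat.factorial k : ℝ) ^ 2 *
          ((1 / r₂) ^ (m₂ + (k : ℝ)) * Real.Gamma (m₂ + (k : ℝ)))) *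
          ((1 / r₁) ^ (m₁ + (k : ℝ)) * Real.Gamma (m₁ + (k : ℝ))) := by
        intro k
        have h1 := Real.Gamma_pos_of_pos (show (0:ℝ) < m₂ + k by positivity)
        have h2 := Real.Gamma_pos_of_pos (show (0:ℝ) < m₁ + k by positivity)
        positivity
      rw [← ENNReal.ofReal_tsum_of_nonneg hnn hsum]
      exact ENNReal.ofReal_ne_top
  rw [houter, tsum_mul_left]
  simp only [gauss2F1]
  have h1 : (1 / r₁ : ℝ) ^ m₁ = 1 / r₁ ^ m₁ := by
    rw [one_div, Real.inv_rpow hr₁.le, one_div]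
  have h2 : (1 / r₂ : ℝ) ^ m₂ = 1 / r₂ ^ m₂ := by
    rw [one_div, Real.inv_rpow hr₂.le, one_div]
  rw [h1, h2]
  have hr₁m : (0:ℝ) < r₁ ^ m₁ := Real.rpow_pos_of_pos hr₁ _
  have hr₂m : (0:ℝ) < r₂ ^ m₂ := Real.rpow_pos_of_pos hr₂ _
  field_simp
end

section
/- For all reals b₁, b₂, b₃, c > 0, x₁, x₂, x₃, and every real s with s > max(|x₁|, |x₂|, |x₃|) and s > 0, one has ∫₀^∞ e^{−s·t} t^{c−1} Φ₂^{(3)}(b₁, b₂, b₃; c; x₁t, x₂t, x₃t) dt = Γ(c) · s^{−c} · (1 − x₁/s)^{−b₁} (1 − x₂/s)^{−b₂} (1 − x₃/s)^{−b₃}. -/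
open Real MeasureTheory

lemma rf_zero (a : ℝ) : risingFactorial a 0 = 1 := by simp [risingFactorial]

lemma rf_succ (a : ℝ) (n : ℕ) :
    risingFactorial a (n + 1) = risingFactorial a n * (a + n) :=
  Finset.prod_range_succ _ _

lemma rf_pos {a : ℝ} (ha : 0 < a) (n : ℕ) : 0 < risingFactorial a n :=
  Finset.prod_pos fun i _ => by positivity

lemma rf_shift (a : ℝ) (n : ℕ) :
    risingFactorial a (n + 1) = a * risingFactorial (a + 1) n := by
  induction n with
  | zero => simp [risingFactorial]
  | succ n ih =>
      rw [rf_succ, ih, rf_succ]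
      push_cast; ring

lemma rf_abs_le (a : ℝ) (n : ℕ) : |risingFactorial a n| ≤ risingFactorial |a| n := by
  induction n with
  | zero => simp [rf_zero]
  | succ n ih =>
      rw [rf_succ, rf_succ, abs_mul]
      refine mul_le_mul ih ((abs_add_le _ _).trans (by simp)) (abs_nonneg _) ?_
      exact Finset.prod_nonneg fun i _ => by positivity

lemma rf_nonneg_abs (a : ℝ) (n : ℕ) : 0 ≤ risingFactorial |a| n :=
  Finset.prod_nonneg fun i _ => by positivity

lemma Gamma_rf {c : ℝ} (hc : 0 < c) (n : ℕ) :
    Real.Gamma (c + n) = Real.Gamma c * risingFactorial c n := by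
  induction n with
  | zero => simp [rf_zero]
  | succ n ih =>
      have h1 : c + ((n + 1 : ℕ) : ℝ) = (c + n) + 1 := by push_cast; ring
      rw [h1, Real.Gamma_add_one (by positivity), ih, rf_succ]; ring

lemma summable_binom {b u : ℝ} (hu : |u| < 1) :
    Summable (fun n : ℕ => risingFactorial b n / (Nat.factorial n : ℝ) * u ^ n) := by
  set r : ℝ := (1 + |u|) / 2 with hr
  have hr1 : r < 1 := by rw [hr]; linarith
  have hru : |u| < r := by rw [hr]; linarith
  have hr0 : 0 < r - |u| := by linarith
  apply summable_of_ratio_norm_eventually_le hr1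
  rw [Filter.eventually_atTop]
  refine ⟨⌈(|b| * |u|) / (r - |u|)⌉₊, fun n hn => ?_⟩
  have hN : (|b| * |u|) / (r - |u|) ≤ (n : ℝ) :=
    le_trans (Nat.le_ceil _) (by exact_mod_cast hn)
  have hNn : |b| * |u| ≤ (r - |u|) * n := by
    rw [div_le_iff₀ hr0] at hN; linarith [hN]
  have key : |b + n| * |u| ≤ r * (n + 1) := by
    have h1 : |b + n| ≤ |b| + n := (abs_add_le _ _).trans (by simp)
    have h2 : |b + n| * |u| ≤ (|b| + n) * |u| :=
      mul_le_mul_of_nonneg_right h1 (abs_nonneg _)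
    nlinarith [abs_nonneg u, abs_nonneg b, hru.le]
  have hfe : risingFactorial b (n + 1) / (Nat.factorial (n + 1) : ℝ) * u ^ (n + 1)
      = (risingFactorial b n / (Nat.factorial n : ℝ) * u ^ n) * ((b + n) * u / (n + 1)) := by
    rw [rf_succ, Nat.factorial_succ, pow_succ]
    push_cast
    field_simp
  rw [hfe, norm_mul]
  have : ‖(b + n) * u / (n + 1)‖ ≤ r := by
    rw [norm_div, norm_mul]
    have hnn : ‖((n : ℝ) + 1)‖ = (n : ℝ) + 1 := by
      rw [Real.norm_eq_abs, abs_of_pos (by positivity)]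
    rw [hnn, div_le_iff₀ (by positivity : (0:ℝ) < (n:ℝ) + 1)]
    simpa [Real.norm_eq_abs] using key
  calc ‖risingFactorial b n / (Nat.factorial n : ℝ) * u ^ n‖ * ‖(b + n) * u / (n + 1)‖
      ≤ ‖risingFactorial b n / (Nat.factorial n : ℝ) * u ^ n‖ * r :=
        mul_le_mul_of_nonneg_left this (norm_nonneg _)
    _ = r * ‖risingFactorial b n / (Nat.factorial n : ℝ) * u ^ n‖ := mul_comm _ _

lemma binomial_tsum {b u : ℝ} (hu : |u| < 1) :
    ∑' n : ℕ, risingFactorial b n / (Nat.factorial n : ℝ) * u ^ n = (1 - u) ^ (-b) := by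
  set a : ℕ → ℝ := fun n => risingFactorial b n / (Nat.factorial n : ℝ) with ha
  set ρ : ℝ := (1 + |u|) / 2 with hρ
  have hρ1 : ρ < 1 := by rw [hρ]; linarith
  have hρu : |u| < ρ := by rw [hρ]; linarith [abs_nonneg u]
  have hρ0 : 0 < ρ := lt_of_le_of_lt (abs_nonneg u) hρu
  set t : Set ℝ := Set.Ioo (-ρ) ρ with ht
  have hmem_u : u ∈ t := by
    rw [ht, Set.mem_Ioo]; rw [abs_lt] at hρu; exact hρu
  have hmem0 : (0 : ℝ) ∈ t := by
    rw [ht, Set.mem_Ioo]; constructor <;> linarith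
  set U : ℕ → ℝ := fun n => (n : ℝ) * |a n| * ρ ^ (n - 1) with hUdef
  have hUsum : Summable U := by
    rw [← summable_nat_add_iff 1]
    refine Summable.of_nonneg_of_le (fun m => by positivity) (fun m => ?_)
      (((summable_binom (by rwa [abs_of_pos hρ0] : |ρ| < 1) (b := |b| + 1))).mul_right |b|)
    have hfacpos : (0:ℝ) < (Nat.factorial m : ℝ) := by positivity
    have h1 : |a (m+1)| = |risingFactorial b (m+1)| / (Nat.factorial (m+1) : ℝ) := by
      rw [ha]; rw [abs_div, Nat.abs_cast]
    have h2 : |risingFactorial b (m+1)| ≤ |b| * risingFactorial (|b| + 1) m := by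
      calc |risingFactorial b (m+1)| ≤ risingFactorial |b| (m+1) := rf_abs_le b (m+1)
        _ = |b| * risingFactorial (|b| + 1) m := rf_shift _ _
    have hρpow : (0:ℝ) ≤ ρ ^ m := by positivity
    have h3 : U (m + 1) = |risingFactorial b (m+1)| / (Nat.factorial m : ℝ) * ρ ^ m := by
      rw [hUdef]
      simp only [Nat.add_sub_cancel]
      rw [h1, Nat.factorial_succ]
      push_cast
      have : ((m:ℝ) + 1) ≠ 0 := by positivity
      field_simp
    rw [h3]
    have h4 : |risingFactorial b (m+1)| / (Nat.factorial m : ℝ)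
        ≤ |b| * risingFactorial (|b| + 1) m / (Nat.factorial m : ℝ) := by gcongr
    calc |risingFactorial b (m+1)| / (Nat.factorial m : ℝ) * ρ ^ m
        ≤ (|b| * risingFactorial (|b| + 1) m / (Nat.factorial m : ℝ)) * ρ ^ m :=
          mul_le_mul_of_nonneg_right h4 hρpow
      _ = risingFactorial (|b| + 1) m / (Nat.factorial m : ℝ) * ρ ^ m * |b| := by ring
  have hg : ∀ (n : ℕ) (y : ℝ), y ∈ t →
      HasDerivAt (fun v => a n * v ^ n) (a n * ((n : ℝ) * y ^ (n - 1))) y :=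
    fun n y _ => (hasDerivAt_pow n y).const_mul (a n)
  have hbound : ∀ (n : ℕ) (y : ℝ), y ∈ t → ‖a n * ((n : ℝ) * y ^ (n - 1))‖ ≤ U n := by
    intro n y hy
    rw [ht, Set.mem_Ioo, ← abs_lt] at hy
    rw [norm_mul, norm_mul, Real.norm_eq_abs, Real.norm_eq_abs, Real.norm_eq_abs,
      Nat.abs_cast, abs_pow]
    rw [hUdef]
    have : |y| ^ (n - 1) ≤ ρ ^ (n - 1) := pow_le_pow_left₀ (abs_nonneg y) hy.le _
    calc |a n| * ((n:ℝ) * |y| ^ (n-1)) ≤ |a n| * ((n:ℝ) * ρ ^ (n-1)) := by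
          exact mul_le_mul_of_nonneg_left
            (mul_le_mul_of_nonneg_left this (Nat.cast_nonneg n)) (abs_nonneg _)
      _ = (n : ℝ) * |a n| * ρ ^ (n - 1) := by ring
  have hsum_u : Summable fun n => a n * u ^ n := summable_binom hu
  have hderiv : ∀ v ∈ t, HasDerivAt (fun z => ∑' n, a n * z ^ n)
      (∑' n, a n * ((n : ℝ) * v ^ (n - 1))) v := fun v hv =>
    hasDerivAt_tsum_of_isPreconnected hUsum isOpen_Ioo (convex_Ioo _ _).isPreconnected
      hg hbound hmem_u hsum_u hv
  have hDsum : ∀ v ∈ t, Summable fun n => a n * ((n : ℝ) * v ^ (n - 1)) :=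
    fun v hv => Summable.of_norm_bounded hUsum (fun n => hbound n v hv)
  -- key ODE identity
  have key : ∀ v ∈ t, (1 - v) * (∑' n, a n * ((n : ℝ) * v ^ (n - 1)))
      = b * ∑' n, a n * v ^ n := by
    intro v hv
    have hS := hDsum v hv
    have hSv : Summable fun n => a n * v ^ n := by
      have := hv; rw [ht, Set.mem_Ioo, ← abs_lt] at this
      exact summable_binom (this.trans hρ1)
    -- shifted series
    have hshift : Summable fun m => risingFactorial b (m+1) / (Nat.factorial m : ℝ) * v ^ m := by
      have h0 : Summable fun m => a (m+1) * (((m:ℕ)+1 : ℝ) * v ^ m) := by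
        have := (summable_nat_add_iff 1).mpr hS
        refine this.congr fun m => ?_
        simp [Nat.add_sub_cancel]
      refine h0.congr fun m => ?_
      rw [ha]
      simp only
      rw [Nat.factorial_succ]
      push_cast
      have : ((m:ℝ) + 1) ≠ 0 := by positivity
      field_simp
    have hD0 : (∑' n, a n * ((n : ℝ) * v ^ (n - 1)))
        = ∑' m, risingFactorial b (m+1) / (Nat.factorial m : ℝ) * v ^ m := by
      rw [Summable.tsum_eq_zero_add hS]
      simp only [Nat.cast_zero, zero_mul, mul_zero, zero_add]
      congr 1
      funext m
      rw [ha]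
      simp only [Nat.add_sub_cancel, Nat.factorial_succ]
      push_cast
      have : ((m:ℝ) + 1) ≠ 0 := by positivity
      field_simp
    have hvD : (∑' n, a n * ((n : ℝ) * v ^ (n - 1))) * v
        = ∑' n, a n * ((n : ℝ) * v ^ n) := by
      rw [← tsum_mul_right]
      congr 1
      funext n
      cases n with
      | zero => simp
      | succ m => simp only [Nat.add_sub_cancel]; rw [pow_succ]; ring
    have hSn : Summable fun n => a n * ((n : ℝ) * v ^ n) := by
      refine (hS.mul_right v).congr fun n => ?_
      cases n with
      | zero => simp
      | succ m => simp only [Nat.add_sub_cancel]; rw [pow_succ]; ring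
    have expand : (1 - v) * (∑' n, a n * ((n : ℝ) * v ^ (n - 1)))
        = (∑' m, risingFactorial b (m+1) / (Nat.factorial m : ℝ) * v ^ m)
          - ∑' n, a n * ((n : ℝ) * v ^ n) := by
      rw [sub_mul, one_mul, mul_comm v _, hvD, hD0]
    rw [expand, ← Summable.tsum_sub hshift hSn]
    rw [← tsum_mul_left]
    congr 1
    funext n
    rw [ha]
    simp only
    rw [rf_succ]
    field_simp
    ring
  -- the function (1-v)^b * f v is constant on t
  set f : ℝ → ℝ := fun z => ∑' n, a n * z ^ n with hf
  set F : ℝ → ℝ := fun v => (1 - v) ^ b * f v with hF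
  have hFderiv : ∀ v ∈ t, HasDerivAt F 0 v := by
    intro v hv
    have h1v : (0 : ℝ) < 1 - v := by
      have := hv.2; simp only [ht, Set.mem_Ioo] at hv; linarith [hv.2]
    have hrp : HasDerivAt (fun v : ℝ => (1 - v) ^ b) ((-1) * b * (1 - v) ^ (b - 1)) v := by
      have := ((hasDerivAt_id v).const_sub 1).rpow_const (p := b) (Or.inl h1v.ne')
      simpa using this
    have hprod := hrp.mul (hderiv v hv)
    have hval : (-1) * b * (1 - v) ^ (b - 1) * f v
        + (1 - v) ^ b * (∑' n, a n * ((n : ℝ) * v ^ (n - 1))) = 0 := by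
      have hsplit : (1 - v) ^ b = (1 - v) ^ (b - 1) * (1 - v) := by
        have h := Real.rpow_add h1v (b - 1) 1
        rw [Real.rpow_one] at h
        rw [show b = b - 1 + 1 by ring, h]
        ring_nf
      rw [hsplit]
      have hk := key v hv
      calc (-1) * b * (1 - v) ^ (b - 1) * f v
          + (1 - v) ^ (b - 1) * (1 - v) * (∑' n, a n * ((n : ℝ) * v ^ (n - 1)))
          = (1 - v) ^ (b - 1) * ((1 - v) * (∑' n, a n * ((n : ℝ) * v ^ (n - 1)))
              - b * f v) := by ring
        _ = 0 := by rw [hk]; simp [hf]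
    rw [← hval]
    exact hprod
  have hconst : F u = F 0 := by
    refine (convex_Ioo (-ρ) ρ).is_const_of_fderivWithin_eq_zero
      (fun v hv => (hFderiv v hv).differentiableAt.differentiableWithinAt) ?_ hmem_u hmem0
    intro v hv
    rw [fderivWithin_of_isOpen isOpen_Ioo hv, (hFderiv v hv).hasFDerivAt.fderiv]
    ext z
    simp
  have hF0 : F 0 = 1 := by
    rw [hF]
    simp only [sub_zero, Real.one_rpow, one_mul, hf]
    rw [tsum_eq_single 0 (fun n hn => by simp [zero_pow hn])]
    simp [ha, rf_zero]
  have h1u : (0 : ℝ) < 1 - u := by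
    have := abs_lt.1 hu; linarith [this.2]
  have hFu : (1 - u) ^ b * (∑' n, a n * u ^ n) = 1 := by
    simpa [hF, hf] using hconst.trans hF0
  have hbne : (1 - u) ^ b ≠ 0 := (Real.rpow_pos_of_pos h1u b).ne'
  rw [Real.rpow_neg h1u.le]
  have hFu' : (∑' n, a n * u ^ n) * (1 - u) ^ b = 1 := by rw [mul_comm]; exact hFu
  exact eq_inv_of_mul_eq_one_left hFu'

lemma integrableOn_exp_rpow {a s : ℝ} (ha : 0 < a) (hs : 0 < s) :
    IntegrableOn (fun t : ℝ => Real.exp (-(s * t)) * t ^ (a - 1)) (Set.Ioi 0) := by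
  have h := integrableOn_rpow_mul_exp_neg_mul_rpow (p := 1) (s := a - 1) (b := s)
    (by linarith) (by norm_num) hs
  refine h.congr_fun (fun x hx => ?_) measurableSet_Ioi
  simp [Real.rpow_one, neg_mul, mul_comm]

lemma integral_exp_rpow {a s : ℝ} (ha : 0 < a) (hs : 0 < s) :
    ∫ t in Set.Ioi 0, Real.exp (-(s * t)) * t ^ (a - 1)
      = (1 / s) ^ a * Real.Gamma a := by
  rw [← integral_rpow_mul_exp_neg_mul_Ioi ha hs]
  exact setIntegral_congr_fun measurableSet_Ioi fun t ht => by ring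

/-- The trivariate confluent hypergeometric function `Φ₂⁽³⁾(b₁,b₂,b₃;c;x₁,x₂,x₃)`. -/
noncomputable def Phi2three (b₁ b₂ b₃ c x₁ x₂ x₃ : ℝ) : ℝ :=
  ∑' p : ℕ × ℕ × ℕ,
    risingFactorial b₁ p.1 * risingFactorial b₂ p.2.1 * risingFactorial b₃ p.2.2 /
      (risingFactorial c (p.1 + p.2.1 + p.2.2) * (Nat.factorial p.1 : ℝ) *
        (Nat.factorial p.2.1 : ℝ) * (Nat.factorial p.2.2 : ℝ)) *
      x₁ ^ p.1 * x₂ ^ p.2.1 * x₃ ^ p.2.2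

set_option maxHeartbeats 2000000 in
theorem stmt_8 (b₁ b₂ b₃ c x₁ x₂ x₃ s : ℝ) (hc : 0 < c)
    (hs₁ : max |x₁| (max |x₂| |x₃|) < s) (hs₀ : 0 < s) :
    ∫ t in Set.Ioi (0 : ℝ),
        Real.exp (-(s * t)) * t ^ (c - 1) * Phi2three b₁ b₂ b₃ c (x₁ * t) (x₂ * t) (x₃ * t) =
      Real.Gamma c * s ^ (-c) * (1 - x₁ / s) ^ (-b₁) * (1 - x₂ / s) ^ (-b₂) *
        (1 - x₃ / s) ^ (-b₃) := by
  have hx₁ : |x₁| < s := lt_of_le_of_lt (le_max_left _ _) hs₁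
  have hx₂ : |x₂| < s := lt_of_le_of_lt (le_trans (le_max_left _ _) (le_max_right _ _)) hs₁
  have hx₃ : |x₃| < s := lt_of_le_of_lt (le_trans (le_max_right _ _) (le_max_right _ _)) hs₁
  have hu₁ : |x₁ / s| < 1 := by rw [abs_div, abs_of_pos hs₀]; exact (div_lt_one hs₀).2 hx₁
  have hu₂ : |x₂ / s| < 1 := by rw [abs_div, abs_of_pos hs₀]; exact (div_lt_one hs₀).2 hx₂
  have hu₃ : |x₃ / s| < 1 := by rw [abs_div, abs_of_pos hs₀]; exact (div_lt_one hs₀).2 hx₃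
  set g₁ : ℕ → ℝ := fun n => risingFactorial b₁ n / (Nat.factorial n : ℝ) * (x₁ / s) ^ n with hg₁
  set g₂ : ℕ → ℝ := fun n => risingFactorial b₂ n / (Nat.factorial n : ℝ) * (x₂ / s) ^ n with hg₂
  set g₃ : ℕ → ℝ := fun n => risingFactorial b₃ n / (Nat.factorial n : ℝ) * (x₃ / s) ^ n with hg₃
  set C : ℕ × ℕ × ℕ → ℝ := fun p =>
    risingFactorial b₁ p.1 * risingFactorial b₂ p.2.1 * risingFactorial b₃ p.2.2 /
      (risingFactorial c (p.1 + p.2.1 + p.2.2) * (Nat.factorial p.1 : ℝ) *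
        (Nat.factorial p.2.1 : ℝ) * (Nat.factorial p.2.2 : ℝ)) with hCdef
  set F : ℕ × ℕ × ℕ → ℝ → ℝ := fun p t =>
    Real.exp (-(s * t)) * t ^ (c - 1) *
      (C p * (x₁ * t) ^ p.1 * (x₂ * t) ^ p.2.1 * (x₃ * t) ^ p.2.2) with hFdef
  -- the integrand is the sum of the F p
  have hpoint : ∀ t : ℝ,
      Real.exp (-(s * t)) * t ^ (c - 1) * Phi2three b₁ b₂ b₃ c (x₁ * t) (x₂ * t) (x₃ * t)
        = ∑' p : ℕ × ℕ × ℕ, F p t := by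
    intro t
    rw [Phi2three, ← tsum_mul_left]
  -- on Ioi 0, F p equals a clean Gamma-type integrand
  have hFeq : ∀ p : ℕ × ℕ × ℕ, Set.EqOn (F p)
      (fun t => (C p * x₁ ^ p.1 * x₂ ^ p.2.1 * x₃ ^ p.2.2) *
        (Real.exp (-(s * t)) * t ^ (c + (p.1 + p.2.1 + p.2.2 : ℕ) - 1))) (Set.Ioi 0) := by
    intro p t ht
    have ht0 : (0 : ℝ) < t := ht
    have hpow : t ^ p.1 * t ^ p.2.1 * t ^ p.2.2 = t ^ ((p.1 + p.2.1 + p.2.2 : ℕ)) := by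
      rw [← pow_add, ← pow_add]
    have hts : t ^ (c - 1) * t ^ ((p.1 + p.2.1 + p.2.2 : ℕ))
        = t ^ (c + (p.1 + p.2.1 + p.2.2 : ℕ) - 1) := by
      rw [← Real.rpow_natCast t (p.1 + p.2.1 + p.2.2), ← Real.rpow_add ht0]
      ring_nf
    calc F p t = C p * x₁ ^ p.1 * x₂ ^ p.2.1 * x₃ ^ p.2.2 *
          (Real.exp (-(s * t)) * (t ^ (c - 1) * (t ^ p.1 * t ^ p.2.1 * t ^ p.2.2))) := by
          rw [hFdef]; simp only [mul_pow]; ring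
      _ = _ := by rw [hpow, hts]
  have hNpos : ∀ p : ℕ × ℕ × ℕ, (0 : ℝ) < c + (p.1 + p.2.1 + p.2.2 : ℕ) := fun p => by
    have : (0:ℝ) ≤ (p.1 + p.2.1 + p.2.2 : ℕ) := Nat.cast_nonneg _
    linarith
  have hFint : ∀ p : ℕ × ℕ × ℕ, IntegrableOn (F p) (Set.Ioi 0) := by
    intro p
    have h0 : IntegrableOn (fun t => (C p * x₁ ^ p.1 * x₂ ^ p.2.1 * x₃ ^ p.2.2) *
        (Real.exp (-(s * t)) * t ^ (c + (p.1 + p.2.1 + p.2.2 : ℕ) - 1))) (Set.Ioi 0) :=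
      (integrableOn_exp_rpow (hNpos p) hs₀).const_mul _
    exact h0.congr_fun (fun t ht => (hFeq p ht).symm) measurableSet_Ioi
  -- value of each integral
  have hIval : ∀ p : ℕ × ℕ × ℕ, ∫ t in Set.Ioi (0:ℝ), F p t
      = (C p * x₁ ^ p.1 * x₂ ^ p.2.1 * x₃ ^ p.2.2) *
        ((1 / s) ^ (c + (p.1 + p.2.1 + p.2.2 : ℕ)) *
          Real.Gamma (c + (p.1 + p.2.1 + p.2.2 : ℕ))) := by
    intro p
    rw [setIntegral_congr_fun measurableSet_Ioi (hFeq p)]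
    rw [MeasureTheory.integral_const_mul, integral_exp_rpow (hNpos p) hs₀]
  -- simplification of the integral value
  have hCsimp : ∀ p : ℕ × ℕ × ℕ,
      (C p * x₁ ^ p.1 * x₂ ^ p.2.1 * x₃ ^ p.2.2) *
        ((1 / s) ^ (c + (p.1 + p.2.1 + p.2.2 : ℕ)) *
          Real.Gamma (c + (p.1 + p.2.1 + p.2.2 : ℕ)))
      = Real.Gamma c * s ^ (-c) * (g₁ p.1 * (g₂ p.2.1 * g₃ p.2.2)) := by
    intro p
    obtain ⟨i, j, k⟩ := p
    simp only [hCdef, hg₁, hg₂, hg₃]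
    rw [Gamma_rf hc]
    have h1s : (0:ℝ) < 1 / s := by positivity
    have hsplit : (1 / s : ℝ) ^ (c + ((i + j + k : ℕ) : ℝ))
        = s ^ (-c) * ((1 / s) ^ i * (1 / s) ^ j * (1 / s) ^ k) := by
      rw [Real.rpow_add h1s, Real.rpow_natCast]
      rw [one_div, Real.inv_rpow hs₀.le, ← Real.rpow_neg hs₀.le]
      rw [pow_add, pow_add]
    rw [hsplit]
    have hrfc : risingFactorial c (i + j + k) ≠ 0 := (rf_pos hc _).ne'
    have hfi : ((Nat.factorial i : ℝ)) ≠ 0 := by positivity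
    have hfj : ((Nat.factorial j : ℝ)) ≠ 0 := by positivity
    have hfk : ((Nat.factorial k : ℝ)) ≠ 0 := by positivity
    have hxs₁ : (x₁ / s) ^ i = x₁ ^ i * (1 / s) ^ i := by rw [div_pow]; ring
    have hxs₂ : (x₂ / s) ^ j = x₂ ^ j * (1 / s) ^ j := by rw [div_pow]; ring
    have hxs₃ : (x₃ / s) ^ k = x₃ ^ k * (1 / s) ^ k := by rw [div_pow]; ring
    rw [hxs₁, hxs₂, hxs₃]
    field_simp
  -- norm integrals
  have hNint : ∀ p : ℕ × ℕ × ℕ, ∫ t in Set.Ioi (0:ℝ), ‖F p t‖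
      = |C p * x₁ ^ p.1 * x₂ ^ p.2.1 * x₃ ^ p.2.2| *
        ((1 / s) ^ (c + (p.1 + p.2.1 + p.2.2 : ℕ)) *
          Real.Gamma (c + (p.1 + p.2.1 + p.2.2 : ℕ))) := by
    intro p
    have heq : Set.EqOn (fun t => ‖F p t‖)
        (fun t => |C p * x₁ ^ p.1 * x₂ ^ p.2.1 * x₃ ^ p.2.2| *
          (Real.exp (-(s * t)) * t ^ (c + (p.1 + p.2.1 + p.2.2 : ℕ) - 1))) (Set.Ioi 0) := by
      intro t ht
      have ht0 : (0:ℝ) < t := ht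
      simp only
      rw [hFeq p ht, norm_mul, Real.norm_eq_abs, Real.norm_eq_abs,
        abs_of_pos (by positivity : (0:ℝ) < Real.exp (-(s * t)) *
          t ^ (c + (p.1 + p.2.1 + p.2.2 : ℕ) - 1))]
    rw [setIntegral_congr_fun measurableSet_Ioi heq, MeasureTheory.integral_const_mul,
      integral_exp_rpow (hNpos p) hs₀]
  -- abs version of the simplification
  have hCabs : ∀ p : ℕ × ℕ × ℕ,
      |C p * x₁ ^ p.1 * x₂ ^ p.2.1 * x₃ ^ p.2.2| *
        ((1 / s) ^ (c + (p.1 + p.2.1 + p.2.2 : ℕ)) *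
          Real.Gamma (c + (p.1 + p.2.1 + p.2.2 : ℕ)))
      = Real.Gamma c * s ^ (-c) * (|g₁ p.1| * (|g₂ p.2.1| * |g₃ p.2.2|)) := by
    intro p
    have hB : (0:ℝ) ≤ (1 / s) ^ (c + (p.1 + p.2.1 + p.2.2 : ℕ)) *
        Real.Gamma (c + (p.1 + p.2.1 + p.2.2 : ℕ)) := by
      have := hNpos p
      positivity
    rw [← abs_of_nonneg hB, ← abs_mul, hCsimp p]
    simp [abs_mul, abs_of_pos (Real.Gamma_pos_of_pos hc),
      abs_of_pos (Real.rpow_pos_of_pos hs₀ (-c))]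
  -- summability
  have hG1 : Summable fun n => |g₁ n| := (summable_binom hu₁).abs
  have hG2 : Summable fun n => |g₂ n| := (summable_binom hu₂).abs
  have hG3 : Summable fun n => |g₃ n| := (summable_binom hu₃).abs
  have hGsum23 : Summable fun q : ℕ × ℕ => |g₂ q.1| * |g₃ q.2| :=
    hG2.mul_of_nonneg hG3 (fun n => abs_nonneg _) (fun n => abs_nonneg _)
  have hGsumfull : Summable fun p : ℕ × ℕ × ℕ => |g₁ p.1| * (|g₂ p.2.1| * |g₃ p.2.2|) :=
    hG1.mul_of_nonneg hGsum23 (fun n => abs_nonneg _)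
      (fun q => mul_nonneg (abs_nonneg _) (abs_nonneg _))
  have hFsum : Summable fun p : ℕ × ℕ × ℕ => ∫ t in Set.Ioi (0:ℝ), ‖F p t‖ := by
    refine Summable.congr (hGsumfull.mul_left (Real.Gamma c * s ^ (-c))) ?_
    intro p
    rw [hNint p, hCabs p]
  -- swap integral and sum
  simp_rw [hpoint]
  rw [← MeasureTheory.integral_tsum_of_summable_integral_norm hFint hFsum]
  -- evaluate the sum
  have hS₁ : HasSum g₁ ((1 - x₁ / s) ^ (-b₁)) := by
    rw [hg₁]
    have h := (summable_binom (b := b₁) hu₁).hasSum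
    rwa [binomial_tsum hu₁] at h
  have hS₂ : HasSum g₂ ((1 - x₂ / s) ^ (-b₂)) := by
    rw [hg₂]
    have h := (summable_binom (b := b₂) hu₂).hasSum
    rwa [binomial_tsum hu₂] at h
  have hS₃ : HasSum g₃ ((1 - x₃ / s) ^ (-b₃)) := by
    rw [hg₃]
    have h := (summable_binom (b := b₃) hu₃).hasSum
    rwa [binomial_tsum hu₃] at h
  have hsum23 : Summable fun q : ℕ × ℕ => g₂ q.1 * g₃ q.2 :=
    Summable.of_abs (hGsum23.congr fun q => (abs_mul _ _).symm)
  have hS23 : HasSum (fun q : ℕ × ℕ => g₂ q.1 * g₃ q.2)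
      ((1 - x₂ / s) ^ (-b₂) * (1 - x₃ / s) ^ (-b₃)) := hS₂.mul hS₃ hsum23
  have hsumfull : Summable fun p : ℕ × ℕ × ℕ => g₁ p.1 * (g₂ p.2.1 * g₃ p.2.2) :=
    Summable.of_abs (hGsumfull.congr fun p => by rw [← abs_mul, ← abs_mul])
  have hSfull : HasSum (fun p : ℕ × ℕ × ℕ => g₁ p.1 * (g₂ p.2.1 * g₃ p.2.2))
      ((1 - x₁ / s) ^ (-b₁) * ((1 - x₂ / s) ^ (-b₂) * (1 - x₃ / s) ^ (-b₃))) :=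
    hS₁.mul hS23 hsumfull
  calc ∑' p : ℕ × ℕ × ℕ, ∫ t in Set.Ioi (0:ℝ), F p t
      = ∑' p : ℕ × ℕ × ℕ, Real.Gamma c * s ^ (-c) *
          (g₁ p.1 * (g₂ p.2.1 * g₃ p.2.2)) := by
        exact tsum_congr fun p => by rw [hIval p, hCsimp p]
    _ = Real.Gamma c * s ^ (-c) *
          ((1 - x₁ / s) ^ (-b₁) * ((1 - x₂ / s) ^ (-b₂) * (1 - x₃ / s) ^ (-b₃))) := by
        rw [tsum_mul_left, hSfull.tsum_eq]
    _ = Real.Gamma c * s ^ (-c) * (1 - x₁ / s) ^ (-b₁) * (1 - x₂ / s) ^ (-b₂) *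
          (1 - x₃ / s) ^ (-b₃) := by ring
end
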